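/- Let H be a real Hilbert space and M ≥ 0. Let ρ be a finite Borel measure on H with ρ({0}) = 0. Let u, v ∈ H satisfy ‖u‖ ≤ M and ‖v‖ ≤ M, and suppose that for ρ-almost every ξ one has ⟨ξ, u⟩ ≥ 0 and ⟨ξ, v⟩ ≥ 0. Define J(w) := ∫_H (e^{−⟨ξ,w⟩} − 1 + ⟨χ(ξ), w⟩)·‖ξ‖^{−2} dρ(ξ) for w ∈ {u, v}. Then both integrals are absolutely convergent and |J(u) − J(v)| ≤ (M + 1)·ρ(H)·‖u − v‖. -/

import Mathlib

open MeasureTheory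
open scoped RealInnerProductSpace

private lemma exp_conv (x y : ℝ) : Real.exp y * ((x - y) + 1) ≤ Real.exp x := by
  calc Real.exp y * ((x - y) + 1) ≤ Real.exp y * Real.exp (x - y) :=
        mul_le_mul_of_nonneg_left (Real.add_one_le_exp _) (Real.exp_pos _).le
    _ = Real.exp x := by rw [← Real.exp_add]; ring_nf

private lemma aux_mono (a b c M r : ℝ) (ha : 0 ≤ a) (hab : a ≤ b) (hc : 0 < c)
    (hM : 0 ≤ M) (hr : 0 ≤ r) (hd : b - a ≤ c * r) (hbM : b ≤ c * M) :
    |((Real.exp (-a) - 1 + (if c ≤ 1 then a else 0)) -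
      (Real.exp (-b) - 1 + (if c ≤ 1 then b else 0))) * c ^ (-2 : ℤ)| ≤ (M + 1) * r := by
  have hb : 0 ≤ b := ha.trans hab
  have hczp : c ^ (-2 : ℤ) = (c * c)⁻¹ := by rw [zpow_neg]; norm_num [sq, zpow_ofNat]
  have hcc : (0:ℝ) < c * c := mul_pos hc hc
  have h1 : Real.exp (-a) - Real.exp (-b) ≤ Real.exp (-a) * (b - a) := by
    have := exp_conv (-b) (-a); nlinarith
  have h2 : Real.exp (-b) * (b - a) ≤ Real.exp (-a) - Real.exp (-b) := by
    have := exp_conv (-a) (-b); nlinarith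
  have hea : Real.exp (-a) ≤ 1 := Real.exp_le_one_iff.mpr (by linarith)
  have heb1 : 1 - Real.exp (-b) ≤ b := by
    have := Real.add_one_le_exp (-b); linarith
  have heb0 : 0 < Real.exp (-b) := Real.exp_pos _
  rw [hczp, abs_mul, abs_inv, abs_of_pos hcc]
  by_cases hc1 : c ≤ 1
  · simp only [hc1, if_true]
    have hE : |(Real.exp (-a) - 1 + a) - (Real.exp (-b) - 1 + b)| ≤ b * (b - a) := by
      rw [abs_le]
      constructor
      · nlinarith
      · nlinarith
    calc |(Real.exp (-a) - 1 + a) - (Real.exp (-b) - 1 + b)| * (c * c)⁻¹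
        ≤ (b * (b - a)) * (c * c)⁻¹ :=
          mul_le_mul_of_nonneg_right hE (inv_nonneg.mpr hcc.le)
      _ ≤ ((c * M) * (c * r)) * (c * c)⁻¹ := by
          apply mul_le_mul_of_nonneg_right _ (inv_nonneg.mpr hcc.le)
          apply mul_le_mul hbM hd (by linarith) (by positivity)
      _ = M * r := by field_simp
      _ ≤ (M + 1) * r := by nlinarith
  · simp only [hc1, if_false]
    have hc1' : 1 ≤ c := le_of_not_ge hc1
    have hE : |(Real.exp (-a) - 1 + 0) - (Real.exp (-b) - 1 + 0)| ≤ b - a := by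
      rw [abs_le]; constructor <;> nlinarith
    calc |(Real.exp (-a) - 1 + 0) - (Real.exp (-b) - 1 + 0)| * (c * c)⁻¹
        ≤ (c * r) * (c * c)⁻¹ :=
          mul_le_mul_of_nonneg_right (hE.trans hd) (inv_nonneg.mpr hcc.le)
      _ = r / c := by field_simp
      _ ≤ r := by rw [div_le_iff₀ hc]; nlinarith
      _ ≤ (M + 1) * r := by nlinarith

private lemma aux_sym (a b c M r : ℝ) (ha : 0 ≤ a) (hb : 0 ≤ b) (hc : 0 < c)
    (hM : 0 ≤ M) (hr : 0 ≤ r) (hab : |a - b| ≤ c * r) (haM : a ≤ c * M) (hbM : b ≤ c * M) :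
    |((Real.exp (-a) - 1 + (if c ≤ 1 then a else 0)) -
      (Real.exp (-b) - 1 + (if c ≤ 1 then b else 0))) * c ^ (-2 : ℤ)| ≤ (M + 1) * r := by
  rcases le_total a b with h | h
  · refine aux_mono a b c M r ha h hc hM hr ?_ hbM
    rw [abs_sub_comm] at hab
    exact (abs_le.mp hab).2
  · rw [abs_mul, abs_sub_comm, ← abs_mul]
    exact aux_mono b a c M r hb h hc hM hr (abs_le.mp hab).2 haM

section Main

variable {H : Type*} [NormedAddCommGroup H] [InnerProductSpace ℝ H] [CompleteSpace H]
    [MeasurableSpace H] [BorelSpace H]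

private lemma meas_aux (w : H) :
    Measurable fun ξ : H =>
      (Real.exp (-⟪ξ, w⟫) - 1 + ⟪(if ‖ξ‖ ≤ 1 then ξ else 0), w⟫) * ‖ξ‖ ^ (-2 : ℤ) := by
  have hinner : Measurable fun ξ : H => ⟪ξ, w⟫ :=
    (continuous_id.inner continuous_const).measurable
  have hset : MeasurableSet {ξ : H | ‖ξ‖ ≤ 1} :=
    measurableSet_le measurable_norm measurable_const
  have hite : Measurable fun ξ : H => (if ‖ξ‖ ≤ 1 then ξ else 0 : H) :=
    Measurable.ite hset measurable_id measurable_const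
  have h2 : Measurable fun ξ : H => ⟪(if ‖ξ‖ ≤ 1 then ξ else 0), w⟫ :=
    ((continuous_id.inner continuous_const).measurable).comp hite
  have h3 : Measurable fun ξ : H => ‖ξ‖ ^ (-2 : ℤ) := by
    have : (fun ξ : H => ‖ξ‖ ^ (-2 : ℤ)) = fun ξ : H => (‖ξ‖ * ‖ξ‖)⁻¹ := by
      funext ξ; rw [zpow_neg]; norm_num [sq, zpow_ofNat]
    rw [this]
    exact (measurable_norm.mul measurable_norm).inv
  exact (((Real.measurable_exp.comp hinner.neg).sub measurable_const).add h2).mul h3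

private lemma key_est (M : ℝ) (hM : 0 ≤ M) (w₁ w₂ : H) (h₁ : ‖w₁‖ ≤ M) (h₂ : ‖w₂‖ ≤ M)
    (ξ : H) (hξ : ξ ≠ 0) (hp₁ : 0 ≤ ⟪ξ, w₁⟫) (hp₂ : 0 ≤ ⟪ξ, w₂⟫) :
    |(Real.exp (-⟪ξ, w₁⟫) - 1 + ⟪(if ‖ξ‖ ≤ 1 then ξ else 0), w₁⟫) * ‖ξ‖ ^ (-2 : ℤ)
      - (Real.exp (-⟪ξ, w₂⟫) - 1 + ⟪(if ‖ξ‖ ≤ 1 then ξ else 0), w₂⟫) * ‖ξ‖ ^ (-2 : ℤ)|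
      ≤ (M + 1) * ‖w₁ - w₂‖ := by
  have hc : (0:ℝ) < ‖ξ‖ := norm_pos_iff.mpr hξ
  have hiff : ∀ w : H, ⟪(if ‖ξ‖ ≤ 1 then ξ else 0), w⟫ = if ‖ξ‖ ≤ 1 then ⟪ξ, w⟫ else 0 := by
    intro w; split_ifs <;> simp
  rw [hiff, hiff, ← sub_mul]
  refine aux_sym _ _ _ M ‖w₁ - w₂‖ hp₁ hp₂ hc hM (norm_nonneg _) ?_ ?_ ?_
  · rw [← inner_sub_right]
    exact abs_real_inner_le_norm ξ (w₁ - w₂)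
  · calc ⟪ξ, w₁⟫ ≤ ‖ξ‖ * ‖w₁‖ := real_inner_le_norm ξ w₁
      _ ≤ ‖ξ‖ * M := mul_le_mul_of_nonneg_left h₁ hc.le
  · calc ⟪ξ, w₂⟫ ≤ ‖ξ‖ * ‖w₂‖ := real_inner_le_norm ξ w₂
      _ ≤ ‖ξ‖ * M := mul_le_mul_of_nonneg_left h₂ hc.le

private lemma int_aux (M : ℝ) (hM : 0 ≤ M)
    (ρ : Measure H) [IsFiniteMeasure ρ] (hρ0 : ρ {0} = 0)
    (w : H) (hw : ‖w‖ ≤ M) (hpw : ∀ᵐ ξ ∂ρ, 0 ≤ ⟪ξ, w⟫) :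
    Integrable (fun ξ : H =>
        (Real.exp (-⟪ξ, w⟫) - 1 + ⟪(if ‖ξ‖ ≤ 1 then ξ else 0), w⟫) * ‖ξ‖ ^ (-2 : ℤ)) ρ := by
  have hne : ∀ᵐ ξ ∂ρ, ξ ≠ 0 := by
    rw [ae_iff]
    convert hρ0 using 2
    ext ξ; simp
  refine Integrable.mono' (integrable_const ((M + 1) * M)) (meas_aux w).aestronglyMeasurable ?_
  filter_upwards [hne, hpw] with ξ hξ hp
  rw [Real.norm_eq_abs]
  have h0 : ‖(0 : H)‖ ≤ M := by simpa using hM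
  have hkey := key_est M hM w 0 hw h0 ξ hξ hp (by simp)
  have hb : (M + 1) * ‖w - 0‖ ≤ (M + 1) * M := by
    rw [sub_zero]
    exact mul_le_mul_of_nonneg_left hw (by linarith)
  refine le_trans ?_ (le_trans hkey hb)
  apply le_of_eq
  congr 1
  simp

end Main

/-- Scalarized Lipschitz estimate for the nonlinear jump part of the function `R` of the
generalized Riccati equations: with `χ(ξ) = ξ · 1_{‖ξ‖ ≤ 1}(ξ)` and
`J(w) = ∫ (e^{−⟪ξ,w⟫} − 1 + ⟪χ(ξ), w⟫)·‖ξ‖⁻² dρ(ξ)` for a finite measure `ρ` with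
`ρ({0}) = 0`, both integrals converge absolutely and
`|J(u) − J(v)| ≤ (M + 1)·ρ(H)·‖u − v‖`. -/
theorem stmt_1 {H : Type*} [NormedAddCommGroup H] [InnerProductSpace ℝ H] [CompleteSpace H]
    [MeasurableSpace H] [BorelSpace H]
    (M : ℝ) (hM : 0 ≤ M)
    (ρ : Measure H) [IsFiniteMeasure ρ] (hρ0 : ρ {0} = 0)
    (u v : H) (hu : ‖u‖ ≤ M) (hv : ‖v‖ ≤ M)
    (hpu : ∀ᵐ ξ ∂ρ, 0 ≤ ⟪ξ, u⟫) (hpv : ∀ᵐ ξ ∂ρ, 0 ≤ ⟪ξ, v⟫) :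
    Integrable (fun ξ : H =>
        (Real.exp (-⟪ξ, u⟫) - 1 + ⟪(if ‖ξ‖ ≤ 1 then ξ else 0), u⟫) * ‖ξ‖ ^ (-2 : ℤ)) ρ ∧
    Integrable (fun ξ : H =>
        (Real.exp (-⟪ξ, v⟫) - 1 + ⟪(if ‖ξ‖ ≤ 1 then ξ else 0), v⟫) * ‖ξ‖ ^ (-2 : ℤ)) ρ ∧
    |(∫ ξ, (Real.exp (-⟪ξ, u⟫) - 1 + ⟪(if ‖ξ‖ ≤ 1 then ξ else 0), u⟫) * ‖ξ‖ ^ (-2 : ℤ) ∂ρ)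
      - (∫ ξ, (Real.exp (-⟪ξ, v⟫) - 1 + ⟪(if ‖ξ‖ ≤ 1 then ξ else 0), v⟫) * ‖ξ‖ ^ (-2 : ℤ) ∂ρ)|
      ≤ (M + 1) * (ρ Set.univ).toReal * ‖u - v‖ := by
  have hiu := int_aux M hM ρ hρ0 u hu hpu
  have hiv := int_aux M hM ρ hρ0 v hv hpv
  refine ⟨hiu, hiv, ?_⟩
  rw [← integral_sub hiu hiv]
  have hne : ∀ᵐ ξ ∂ρ, ξ ≠ 0 := by
    rw [ae_iff]
    convert hρ0 using 2
    ext ξ; simp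
  have hbound : ∀ᵐ ξ ∂ρ,
      ‖(Real.exp (-⟪ξ, u⟫) - 1 + ⟪(if ‖ξ‖ ≤ 1 then ξ else 0), u⟫) * ‖ξ‖ ^ (-2 : ℤ)
        - (Real.exp (-⟪ξ, v⟫) - 1 + ⟪(if ‖ξ‖ ≤ 1 then ξ else 0), v⟫) * ‖ξ‖ ^ (-2 : ℤ)‖
        ≤ (M + 1) * ‖u - v‖ := by
    filter_upwards [hne, hpu, hpv] with ξ hξ h1 h2
    rw [Real.norm_eq_abs]
    exact key_est M hM u v hu hv ξ hξ h1 h2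
  calc |∫ ξ, ((Real.exp (-⟪ξ, u⟫) - 1 + ⟪(if ‖ξ‖ ≤ 1 then ξ else 0), u⟫) * ‖ξ‖ ^ (-2 : ℤ)
          - (Real.exp (-⟪ξ, v⟫) - 1 + ⟪(if ‖ξ‖ ≤ 1 then ξ else 0), v⟫) * ‖ξ‖ ^ (-2 : ℤ)) ∂ρ|
      ≤ (M + 1) * ‖u - v‖ * (ρ Set.univ).toReal :=
        norm_integral_le_of_norm_le_const hbound
    _ = (M + 1) * (ρ Set.univ).toReal * ‖u - v‖ := by ring
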